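/- Let n ≥ 2 and 1 ≤ k ≤ n−1 with 2k > n, and let U ∈ U(n) be a unitary matrix written in block form U = [[X, Y], [Z, V]] with X ∈ ℂ^{(n−k)×k}, Y ∈ ℂ^{(n−k)×(n−k)}, Z ∈ ℂ^{k×k}, V ∈ ℂ^{k×(n−k)}. Then the spectrum (set of eigenvalues in ℂ) of ZᴴZ equals the union of the spectrum of Y Yᴴ with the singleton {1}. -/
import Mathlib


open Matrix

private lemma mem_spec_mul_comm {m p : Type*} [Fintype m] [Fintype p]
    [DecidableEq m] [DecidableEq p]
    (A : Matrix m p ℂ) (B : Matrix p m ℂ) {μ : ℂ} (hμ : μ ≠ 0) :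
    μ ∈ spectrum ℂ (A * B) ↔ μ ∈ spectrum ℂ (B * A) := by
  rw [spectrum.mem_iff, spectrum.mem_iff, not_iff_not,
    Matrix.isUnit_iff_isUnit_det, Matrix.isUnit_iff_isUnit_det,
    isUnit_iff_ne_zero, isUnit_iff_ne_zero]
  have h1 : (algebraMap ℂ (Matrix m m ℂ)) μ - A * B
      = μ • (1 + A * ((-μ⁻¹) • B)) := by
    rw [smul_add, Matrix.mul_smul, smul_smul, Algebra.algebraMap_eq_smul_one]
    field_simp
    rw [sub_eq_add_neg, ← neg_one_smul ℂ (A * B)]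
  have h2 : (algebraMap ℂ (Matrix p p ℂ)) μ - B * A
      = μ • (1 + ((-μ⁻¹) • B) * A) := by
    rw [smul_add, Matrix.smul_mul, smul_smul, Algebra.algebraMap_eq_smul_one]
    field_simp
    rw [sub_eq_add_neg, ← neg_one_smul ℂ (B * A)]
  rw [h1, h2, Matrix.det_smul, Matrix.det_smul, Matrix.det_one_add_mul_comm]
  simp [hμ]

private lemma mem_spec_one_sub {A : Type*} [Ring A] [Algebra ℂ A]
    (a : A) (μ : ℂ) : μ ∈ spectrum ℂ (1 - a) ↔ (1 - μ) ∈ spectrum ℂ a := by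
  rw [spectrum.mem_iff, spectrum.mem_iff, not_iff_not]
  have h : (algebraMap ℂ A) μ - (1 - a) = -((algebraMap ℂ A) (1 - μ) - a) := by
    rw [_root_.map_sub, _root_.map_one]; abel
  rw [h, IsUnit.neg_iff]

/-- For a block-decomposed unitary matrix `U = [[X, Y], [Z, V]]` with `2k > n`, the spectrum
of `ZᴴZ` is the union of the spectrum of `Y Yᴴ` with `{1}`. -/
theorem spectrum_conjTranspose_mul_self_of_unitary_blocks
    (n k : ℕ) (hn : 2 ≤ n) (hk1 : 1 ≤ k) (hk2 : k ≤ n - 1) (hkge : n < 2 * k)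
    (X : Matrix (Fin (n - k)) (Fin k) ℂ) (Y : Matrix (Fin (n - k)) (Fin (n - k)) ℂ)
    (Z : Matrix (Fin k) (Fin k) ℂ) (V : Matrix (Fin k) (Fin (n - k)) ℂ)
    (hU₁ : (Matrix.fromBlocks X Y Z V)ᴴ * Matrix.fromBlocks X Y Z V = 1)
    (hU₂ : Matrix.fromBlocks X Y Z V * (Matrix.fromBlocks X Y Z V)ᴴ = 1) :
    spectrum ℂ (Zᴴ * Z) = spectrum ℂ (Y * Yᴴ) ∪ {1} := by
  -- extract the block identities
  rw [Matrix.fromBlocks_conjTranspose, ← Matrix.fromBlocks_one,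
    Matrix.fromBlocks_multiply] at hU₁ hU₂
  have hZ : Zᴴ * Z = 1 - Xᴴ * X := by
    have := congrArg Matrix.toBlocks₁₁ hU₁
    simp only [Matrix.toBlocks_fromBlocks₁₁] at this
    linear_combination (norm := noncomm_ring) this
  have hY : Y * Yᴴ = 1 - X * Xᴴ := by
    have := congrArg Matrix.toBlocks₁₁ hU₂
    simp only [Matrix.toBlocks_fromBlocks₁₁] at this
    linear_combination (norm := noncomm_ring) this
  -- 0 is an eigenvalue of XᴴX because rank XᴴX ≤ n - k < k
  have hzero : (0 : ℂ) ∈ spectrum ℂ (Xᴴ * X) := by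
    rw [spectrum.zero_mem_iff]
    intro h
    have hr := Matrix.rank_of_isUnit _ h
    have hle : (Xᴴ * X).rank ≤ Fintype.card (Fin (n - k)) := by
      refine le_trans (Matrix.rank_mul_le_right _ _) ?_
      exact Matrix.rank_le_card_height X
    rw [hr] at hle
    simp only [Fintype.card_fin] at hle
    omega
  ext μ
  simp only [hZ, hY, mem_spec_one_sub, Set.mem_union, Set.mem_singleton_iff]
  by_cases hμ : μ = 1
  · subst hμ
    simp [hzero]
  · have h1μ : (1 : ℂ) - μ ≠ 0 := sub_ne_zero.mpr (Ne.symm hμ)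
    rw [mem_spec_mul_comm Xᴴ X h1μ]
    simp [hμ]
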